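/- Let G be a finite group, K a subgroup of G, and P a matrix-valued function on ℝ² satisfying P(R_g l) = (M^α_g)† P(l) M^β_g for all g ∈ G, where M^α and M^β are unitary representations of G that restrict to irreducible representations of K. Fix l with P(R_k l) = P(l) for all k ∈ K. If the restrictions of M^α and M^β to K are inequivalent irreducible representations of K, then P(l) = 0. -/
import Mathlib

open Matrix

/-- **Corollary 1 at fixed bosonic momentum (no mixing at a little group).**
Let `K ≤ G`, let `P` satisfy the transformation law `P (R g l) = (Mα g)ᴴ * P l * Mβ g`
with `Mα`, `Mβ` unitary representations of `G` restricting to irreducible representations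
of `K`.  If `l` satisfies `P (R k l) = P l` for all `k ∈ K` and the restrictions of `Mα`
and `Mβ` to `K` are inequivalent, then `P l = 0`. -/
theorem no_mixing_at_little_group {G : Type} [Group G] [Finite G] {dα dβ : ℕ}
    (K : Subgroup G)
    (R : G →* Matrix (Fin 2) (Fin 2) ℝ)
    (hOrth : ∀ g, (R g)ᵀ * R g = 1)
    (Mα : G →* Matrix (Fin dα) (Fin dα) ℂ) (Mβ : G →* Matrix (Fin dβ) (Fin dβ) ℂ)
    (hUα : ∀ g, (Mα g)ᴴ * Mα g = 1) (hUβ : ∀ g, (Mβ g)ᴴ * Mβ g = 1)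
    (hIrrα : ∀ p : Submodule ℂ (Fin dα → ℂ),
      (∀ k ∈ K, ∀ v ∈ p, (Mα k).mulVec v ∈ p) → p = ⊥ ∨ p = ⊤)
    (hIrrβ : ∀ p : Submodule ℂ (Fin dβ → ℂ),
      (∀ k ∈ K, ∀ v ∈ p, (Mβ k).mulVec v ∈ p) → p = ⊥ ∨ p = ⊤)
    (hNequiv : ¬ ∃ (S : Matrix (Fin dα) (Fin dβ) ℂ) (T : Matrix (Fin dβ) (Fin dα) ℂ),
      S * T = 1 ∧ T * S = 1 ∧ ∀ k ∈ K, Mα k * S = S * Mβ k)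
    (P : (Fin 2 → ℝ) → Matrix (Fin dα) (Fin dβ) ℂ)
    (hlaw : ∀ g l', P ((R g).mulVec l') = (Mα g)ᴴ * P l' * Mβ g)
    (l : Fin 2 → ℝ)
    (hfix : ∀ k ∈ K, P ((R k).mulVec l) = P l) :
    P l = 0 := by
  by_contra hne
  set A := P l with hA
  -- Intertwining relation: Mα k * A = A * Mβ k for k ∈ K
  have hint : ∀ k ∈ K, Mα k * A = A * Mβ k := by
    intro k hk
    have h1 : A = (Mα k)ᴴ * A * Mβ k := by
      conv_lhs => rw [← hfix k hk, hlaw]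
    have h2 : Mα k * (Mα k)ᴴ = 1 := mul_eq_one_comm.mp (hUα k)
    calc Mα k * A = Mα k * ((Mα k)ᴴ * A * Mβ k) := by rw [← h1]
      _ = (Mα k * (Mα k)ᴴ) * A * Mβ k := by simp only [Matrix.mul_assoc]
      _ = A * Mβ k := by rw [h2, Matrix.one_mul]
  set f : (Fin dβ → ℂ) →ₗ[ℂ] (Fin dα → ℂ) := Matrix.toLin' A with hf
  have hcomm : ∀ k ∈ K, ∀ v, A.mulVec ((Mβ k).mulVec v) = (Mα k).mulVec (A.mulVec v) := by
    intro k hk v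
    rw [Matrix.mulVec_mulVec, Matrix.mulVec_mulVec, hint k hk]
  have hfapp : ∀ v, f v = A.mulVec v := fun v => Matrix.toLin'_apply A v
  have hkerinv : ∀ k ∈ K, ∀ v ∈ LinearMap.ker f, (Mβ k).mulVec v ∈ LinearMap.ker f := by
    intro k hk v hv
    rw [LinearMap.mem_ker, hfapp] at hv ⊢
    rw [hcomm k hk, hv, Matrix.mulVec_zero]
  have hrinv : ∀ k ∈ K, ∀ v ∈ LinearMap.range f, (Mα k).mulVec v ∈ LinearMap.range f := by
    intro k hk v hv
    obtain ⟨u, hu⟩ := hv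
    refine ⟨(Mβ k).mulVec u, ?_⟩
    rw [hfapp] at hu ⊢
    rw [hcomm k hk, hu]
  have hker : LinearMap.ker f = ⊥ := by
    rcases hIrrβ (LinearMap.ker f) hkerinv with h | h
    · exact h
    · exfalso
      apply hne
      ext i j
      have hm : (Pi.single j 1 : Fin dβ → ℂ) ∈ LinearMap.ker f := h ▸ Submodule.mem_top
      rw [LinearMap.mem_ker, hfapp] at hm
      have := congrFun hm i
      simpa [Matrix.mulVec_single] using this
  have hrange : LinearMap.range f = ⊤ := by
    rcases hIrrα (LinearMap.range f) hrinv with h | h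
    · exfalso
      apply hne
      ext i j
      have hm : A.mulVec (Pi.single j 1) ∈ LinearMap.range f := ⟨Pi.single j 1, hfapp _⟩
      rw [h, Submodule.mem_bot] at hm
      have := congrFun hm i
      simpa [Matrix.mulVec_single] using this
    · exact h
  have hbij : Function.Bijective f :=
    ⟨LinearMap.ker_eq_bot.mp hker, LinearMap.range_eq_top.mp hrange⟩
  set e : (Fin dβ → ℂ) ≃ₗ[ℂ] (Fin dα → ℂ) := LinearEquiv.ofBijective f hbij with he
  set T : Matrix (Fin dβ) (Fin dα) ℂ := LinearMap.toMatrix' (e.symm : (Fin dα → ℂ) →ₗ[ℂ] (Fin dβ → ℂ)) with hT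
  have hfA : LinearMap.toMatrix' f = A := LinearMap.toMatrix'_toLin' A
  have hAT : A * T = 1 := by
    rw [← hfA, hT, ← LinearMap.toMatrix'_comp]
    have hc : f ∘ₗ (e.symm : (Fin dα → ℂ) →ₗ[ℂ] (Fin dβ → ℂ)) = LinearMap.id :=
      LinearMap.ext fun v => e.apply_symm_apply v
    rw [hc, LinearMap.toMatrix'_id]
  have hTA : T * A = 1 := by
    rw [← hfA, hT, ← LinearMap.toMatrix'_comp]
    have hc : (e.symm : (Fin dα → ℂ) →ₗ[ℂ] (Fin dβ → ℂ)) ∘ₗ f = LinearMap.id :=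
      LinearMap.ext fun v => e.symm_apply_apply v
    rw [hc, LinearMap.toMatrix'_id]
  exact hNequiv ⟨A, T, hAT, hTA, hint⟩
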